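/- Let R be a commutative noetherian ring and F a flat R-module. Then the double character module F⁺⁺ is a flat and pure injective R-module, the canonical evaluation map λ_F : F → F⁺⁺ is a pure monomorphism, and the quotient F⁺⁺/λ_F(F) is a flat R-module. In particular, every flat R-module is a pure submodule of a pure injective flat R-module with flat quotient. -/

import Mathlib

universe u

open TensorProduct

/-- A pure monomorphism of `R`-modules: an injective `R`-linear map `f : A → B` such that
for every `R`-module `Q` the induced map `Q ⊗[R] A → Q ⊗[R] B` is injective. -/
def IsPureMono {R : Type u} [CommRing R] {A B : Type u}
    [AddCommGroup A] [AddCommGroup B] [Module R A] [Module R B]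
    (f : A →ₗ[R] B) : Prop :=
  Function.Injective f ∧
    ∀ (Q : Type u) [AddCommGroup Q] [Module R Q],
      Function.Injective (LinearMap.lTensor Q f)

/-- An `R`-module `P` is pure injective if every `R`-linear map `A → P` extends along
every pure monomorphism `A → B`. -/
def IsPureInjective (R : Type u) [CommRing R] (P : Type u)
    [AddCommGroup P] [Module R P] : Prop :=
  ∀ ⦃A B : Type u⦄ [AddCommGroup A] [AddCommGroup B] [Module R A] [Module R B]
    (f : A →ₗ[R] B), IsPureMono f → ∀ g : A →ₗ[R] P, ∃ h : B →ₗ[R] P, h ∘ₗ f = g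

/-- An `R`-module `M` is absolutely pure if every injective `R`-linear map with domain `M`
is a pure monomorphism. -/
def IsAbsolutelyPure (R : Type u) [CommRing R] (M : Type u)
    [AddCommGroup M] [Module R M] : Prop :=
  ∀ (N : Type u) [AddCommGroup N] [Module R N] (f : M →ₗ[R] N),
    Function.Injective f → IsPureMono f

/-- An `R`-module `C` is cotorsion if every short exact sequence `0 → C → G → F' → 0`
with flat `F'` splits. -/
def IsCotorsion (R : Type u) [CommRing R] (C : Type u)
    [AddCommGroup C] [Module R C] : Prop :=
  ∀ (G : Type u) [AddCommGroup G] [Module R G] (i : C →ₗ[R] G),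
    Function.Injective i → Module.Flat R (G ⧸ LinearMap.range i) →
      ∃ r : G →ₗ[R] C, r ∘ₗ i = LinearMap.id

/-- The canonical evaluation map from a module to its double character module. -/
def evalCharacterHom (R : Type u) [CommRing R] (M : Type u)
    [AddCommGroup M] [Module R M] :
    M →ₗ[R] CharacterModule (CharacterModule M) where
  toFun m :=
    { toFun := fun φ => φ m
      map_zero' := rfl
      map_add' := fun _ _ => rfl }
  map_add' m n := by ext φ; exact map_add φ m n
  map_smul' r m := by
    ext φ
    show φ (r • m) = (r • φ) m
    rw [CharacterModule.smul_apply]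

open LinearMap
set_option maxHeartbeats 1000000
set_option synthInstance.maxHeartbeats 400000

section Theta
variable {R : Type u} [CommRing R] {M : Type u} [AddCommGroup M] [Module R M]

/-- The natural map `P ⊗ M⁺ → Hom(P, M)⁺`, `p ⊗ f ↦ (g ↦ f (g p))`. -/
noncomputable def theta (P : Type u) [AddCommGroup P] [Module R P] :
    P ⊗[R] CharacterModule M →+ CharacterModule (P →ₗ[R] M) :=
  TensorProduct.liftAddHom
    (AddMonoidHom.mk' (fun p ↦ AddMonoidHom.mk' (fun f ↦ AddMonoidHom.mk'
        (fun g : P →ₗ[R] M ↦ f (g p))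
        (fun g₁ g₂ ↦ by simp [LinearMap.add_apply, map_add]))
      (fun f₁ f₂ ↦ by ext g; rfl))
      (fun p₁ p₂ ↦ by ext f g; show f (g (p₁+p₂)) = _; rw [map_add, map_add]; rfl))
    (fun r p f ↦ by
      ext g
      show f (g (r • p)) = (r • f) (g p)
      rw [map_smul]
      rfl)

lemma theta_tmul (P : Type u) [AddCommGroup P] [Module R P] (p : P)
    (f : CharacterModule M) (g : P →ₗ[R] M) :
    theta P (p ⊗ₜ[R] f) g = f (g p) := rfl

lemma theta_natural {P Q : Type u} [AddCommGroup P] [Module R P] [AddCommGroup Q] [Module R Q]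
    (h : Q →ₗ[R] P) (x : Q ⊗[R] CharacterModule M) (g : P →ₗ[R] M) :
    theta P (rTensor (CharacterModule M) h x) g = theta Q x (g ∘ₗ h) := by
  induction x with
  | zero => rfl
  | tmul q f => simp [theta_tmul]
  | add a b ha hb =>
    rw [map_add, map_add, map_add]
    exact congrArg₂ (· + ·) ha hb

/-- The `i`-th character component used to invert `theta` on finite free modules. -/
noncomputable def sigmaChar {n : ℕ} (c : CharacterModule ((Fin n → R) →ₗ[R] M)) (i : Fin n) :
    CharacterModule M where
  toFun m := c ((LinearMap.proj i).smulRight m)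
  map_zero' := by
    have h : (LinearMap.proj (R := R) (φ := fun _ : Fin n => R) i).smulRight (0 : M) = 0 :=
      LinearMap.ext fun v ↦ by simp
    show c ((LinearMap.proj i).smulRight (0 : M)) = 0
    rw [h, map_zero]
  map_add' m₁ m₂ := by
    have h : (LinearMap.proj (R := R) (φ := fun _ : Fin n => R) i).smulRight (m₁ + m₂)
        = (LinearMap.proj i).smulRight m₁ + (LinearMap.proj i).smulRight m₂ :=
      LinearMap.ext fun v ↦ by simp [smul_add]
    show c ((LinearMap.proj i).smulRight (m₁ + m₂)) = _
    rw [h, map_add]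

lemma sigmaChar_apply {n : ℕ} (c : CharacterModule ((Fin n → R) →ₗ[R] M)) (i : Fin n) (m : M) :
    sigmaChar c i m = c ((LinearMap.proj i).smulRight m) := rfl

/-- One-sided inverse of `theta` on finite free modules. -/
noncomputable def sigma (n : ℕ) (c : CharacterModule ((Fin n → R) →ₗ[R] M)) :
    (Fin n → R) ⊗[R] CharacterModule M :=
  ∑ i : Fin n, (Pi.single i 1 : Fin n → R) ⊗ₜ[R] sigmaChar c i

lemma theta_sigma (n : ℕ) (c : CharacterModule ((Fin n → R) →ₗ[R] M)) :
    theta (Fin n → R) (sigma n c) = c := by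
  ext g
  rw [sigma, map_sum]
  refine (AddMonoidHom.finset_sum_apply _ _ _).trans ?_
  calc ∑ i : Fin n, theta (Fin n → R) ((Pi.single i 1 : Fin n → R) ⊗ₜ[R] sigmaChar c i) g
      = ∑ i : Fin n, c ((LinearMap.proj i).smulRight (g (Pi.single i 1))) := rfl
    _ = c (∑ i : Fin n, (LinearMap.proj i).smulRight (g (Pi.single i 1))) := (map_sum c _ _).symm
    _ = c g := by
        congr 1
        refine LinearMap.ext fun v ↦ ?_
        rw [LinearMap.sum_apply]
        simp only [LinearMap.smulRight_apply, LinearMap.proj_apply]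
        refine Eq.trans ?_ (LinearMap.pi_apply_eq_sum_univ g v).symm
        exact Finset.sum_congr rfl fun i _ ↦ congrArg (v i • ·)
          (congrArg g (funext fun j ↦ by simp [Pi.single_apply, eq_comm]))

lemma sigma_theta (n : ℕ) (x : (Fin n → R) ⊗[R] CharacterModule M) :
    sigma n (theta (Fin n → R) x) = x := by
  have hadd : ∀ c₁ c₂ : CharacterModule ((Fin n → R) →ₗ[R] M),
      sigma n (c₁ + c₂) = sigma n c₁ + sigma n c₂ := by
    intro c₁ c₂
    rw [sigma, sigma, sigma, ← Finset.sum_add_distrib]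
    refine Finset.sum_congr rfl fun i _ ↦ ?_
    rw [← TensorProduct.tmul_add]
    congr 1
  induction x with
  | zero =>
    rw [map_zero, sigma]
    refine Finset.sum_eq_zero fun i _ ↦ ?_
    have h : sigmaChar (0 : CharacterModule ((Fin n → R) →ₗ[R] M)) i = 0 :=
      DFunLike.ext _ _ fun m ↦ rfl
    rw [h, tmul_zero]
  | tmul v f =>
    have h1 : ∀ i : Fin n, sigmaChar (theta (Fin n → R) (v ⊗ₜ[R] f)) i
        = (v i • f : CharacterModule M) := fun i ↦ DFunLike.ext _ _ fun m ↦ by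
      rw [sigmaChar_apply, theta_tmul, CharacterModule.smul_apply]
      rfl
    calc sigma n (theta (Fin n → R) (v ⊗ₜ[R] f))
        = ∑ i : Fin n, (Pi.single i 1 : Fin n → R) ⊗ₜ[R] (v i • f : CharacterModule M) :=
          Finset.sum_congr rfl fun i _ ↦ by rw [h1 i]
      _ = ∑ i : Fin n, (Pi.single i (v i) : Fin n → R) ⊗ₜ[R] f := by
          refine Finset.sum_congr rfl fun i _ ↦ ?_
          rw [tmul_smul, smul_tmul', show v i • (Pi.single i 1 : Fin n → R) = Pi.single i (v i)
            from by rw [← Pi.single_smul, smul_eq_mul, mul_one]]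
      _ = v ⊗ₜ[R] f := by rw [← sum_tmul, Finset.univ_sum_single]
  | add a b ha hb => rw [map_add, hadd, ha, hb]

end Theta

section ThetaInj
variable {R : Type u} [CommRing R] {M : Type u} [AddCommGroup M] [Module R M]

lemma eq_zero_of_theta_eq_zero {P : Type u} [AddCommGroup P] [Module R P]
    {n m : ℕ} (π : (Fin n → R) →ₗ[R] P) (hπ : Function.Surjective π)
    (d : (Fin m → R) →ₗ[R] (Fin n → R)) (hd : LinearMap.range d = LinearMap.ker π)
    (x : P ⊗[R] CharacterModule M) (hx : ∀ g : P →ₗ[R] M, theta P x g = 0) :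
    x = 0 := by
  obtain ⟨y, rfl⟩ := LinearMap.rTensor_surjective (CharacterModule M) hπ x
  set c := theta (Fin n → R) y with hc
  -- `c` kills every `g` with `g ∘ₗ d = 0`
  have hker : ∀ g : (Fin n → R) →ₗ[R] M, g ∘ₗ d = 0 → c g = 0 := by
    intro g hg
    have hle : LinearMap.ker π ≤ LinearMap.ker g := by
      rw [← hd]
      rintro _ ⟨v, rfl⟩
      exact congrFun (congrArg (fun (h : (Fin m → R) →ₗ[R] M) ↦ (h : (Fin m → R) → M)) hg) v
    set e := π.quotKerEquivOfSurjective hπ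
    set gbar : P →ₗ[R] M := ((LinearMap.ker π).liftQ g hle) ∘ₗ (e.symm : P →ₗ[R] _)
    have hgbar : gbar ∘ₗ π = g := by
      refine LinearMap.ext fun v ↦ ?_
      have he : e ((LinearMap.ker π).mkQ v) = π v := rfl
      have : e.symm (π v) = (LinearMap.ker π).mkQ v := by
        rw [← he, LinearEquiv.symm_apply_apply]
      show ((LinearMap.ker π).liftQ g hle) (e.symm (π v)) = g v
      rw [this]
      rfl
    rw [hc, ← hgbar, ← theta_natural π y gbar, hx gbar]
  -- factor `c` through `g ↦ g ∘ₗ d`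
  set ρ : ((Fin n → R) →ₗ[R] M) →ₗ[R] ((Fin m → R) →ₗ[R] M) := d.lcomp R M
  have key : ∀ u v : (Fin n → R) →ₗ[R] M, ρ u = ρ v → c u = c v := by
    intro u v huv
    have h0 : c (u - v) = 0 := hker _ (by
      refine LinearMap.ext fun w ↦ ?_
      have : ρ (u - v) = 0 := by rw [map_sub, huv, sub_self]
      exact congrFun (congrArg (fun (h : (Fin m → R) →ₗ[R] M) ↦ (h : (Fin m → R) → M)) this) w)
    have := map_sub c u v
    rw [h0] at this
    exact (sub_eq_zero.mp this.symm)
  have hρr : Function.Surjective ρ.rangeRestrict := LinearMap.surjective_rangeRestrict ρ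
  set c₁ : CharacterModule (LinearMap.range ρ) := AddMonoidHom.mk'
    (fun z ↦ c (Function.surjInv hρr z))
    (fun z₁ z₂ ↦ by
      rw [← map_add c]
      exact key _ _ (by
        have e1 : ρ.rangeRestrict (Function.surjInv hρr (z₁ + z₂)) = z₁ + z₂ :=
          Function.surjInv_eq hρr _
        have e2 : ρ.rangeRestrict (Function.surjInv hρr z₁ + Function.surjInv hρr z₂)
            = z₁ + z₂ := by
          rw [map_add, Function.surjInv_eq hρr, Function.surjInv_eq hρr]
        exact congrArg Subtype.val (e1.trans e2.symm)))
  obtain ⟨w', hw'⟩ := CharacterModule.dual_surjective_of_injective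
    (LinearMap.range ρ).subtype (Submodule.injective_subtype _) c₁
  have hw'ρ : ∀ g : (Fin n → R) →ₗ[R] M, w' (ρ g) = c g := by
    intro g
    have h1 : w' (ρ g) = c₁ ⟨ρ g, LinearMap.mem_range_self ρ g⟩ :=
      congrFun (congrArg (fun (h : CharacterModule (LinearMap.range ρ)) ↦
        (h : LinearMap.range ρ → AddCircle (1:ℚ))) hw') ⟨ρ g, LinearMap.mem_range_self ρ g⟩
    rw [h1]
    refine key _ _ ?_
    exact congrArg Subtype.val (Function.surjInv_eq hρr ⟨ρ g, LinearMap.mem_range_self ρ g⟩)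
  -- pull back along `d`
  set w := sigma m w'
  have hθw : theta (Fin n → R) (LinearMap.rTensor (CharacterModule M) d w) = c := by
    refine DFunLike.ext _ _ fun g ↦ ?_
    rw [theta_natural d w g, theta_sigma]
    exact hw'ρ g
  have hyw : y = LinearMap.rTensor (CharacterModule M) d w := by
    rw [← sigma_theta n y, ← hc, ← hθw, sigma_theta]
  rw [hyw, ← LinearMap.rTensor_comp_apply]
  have hπd : π ∘ₗ d = 0 := by
    refine LinearMap.ext fun v ↦ ?_
    have : d v ∈ LinearMap.ker π := hd ▸ LinearMap.mem_range_self d v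
    simpa using this
  rw [hπd]
  simp
end ThetaInj

section Noeth
variable {R : Type u} [CommRing R]

/-- Over a noetherian ring, the character module of a module satisfying Baer's criterion
(e.g. an injective module) is flat. -/
lemma flat_characterModule_of_baer [IsNoetherianRing R]
    (M : Type u) [AddCommGroup M] [Module R M] (hM : Module.Baer R M) :
    Module.Flat R (CharacterModule M) := by
  rw [Module.Flat.iff_rTensor_injective']
  intro I
  rw [injective_iff_map_eq_zero]
  intro z hz
  haveI : Module.Finite R I :=
    Module.Finite.iff_fg.mpr (IsNoetherian.noetherian I)
  obtain ⟨n, π, hπ⟩ := Module.Finite.exists_fin' R I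
  haveI : Module.Finite R (LinearMap.ker π) :=
    Module.Finite.iff_fg.mpr (IsNoetherian.noetherian _)
  obtain ⟨m, τ, hτ⟩ := Module.Finite.exists_fin' R (LinearMap.ker π)
  set d : (Fin m → R) →ₗ[R] (Fin n → R) := (LinearMap.ker π).subtype ∘ₗ τ
  have hd : LinearMap.range d = LinearMap.ker π := by
    rw [LinearMap.range_comp, LinearMap.range_eq_top.mpr hτ, Submodule.map_subtype_top]
  refine eq_zero_of_theta_eq_zero π hπ d hd z ?_
  intro g
  obtain ⟨g', hg'⟩ := hM I g
  have hcomp : g' ∘ₗ I.subtype = g := LinearMap.ext fun a ↦ by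
    rw [LinearMap.comp_apply, Submodule.coe_subtype, hg' a a.2]
  rw [← hcomp, ← theta_natural I.subtype z g', hz]
  rfl
end Noeth

section Eval
variable {R : Type u} [CommRing R] (M : Type u) [AddCommGroup M] [Module R M]

lemma evalCharacterHom_apply (m : M) (φ : CharacterModule M) :
    evalCharacterHom R M m φ = φ m := rfl

lemma evalCharacterHom_injective : Function.Injective (evalCharacterHom R M) := by
  rw [injective_iff_map_eq_zero]
  intro a ha
  refine CharacterModule.eq_zero_of_character_apply fun c ↦ ?_
  have := congrFun (congrArg (fun (h : CharacterModule (CharacterModule M)) ↦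
    (h : CharacterModule M → AddCircle (1:ℚ))) ha) c
  exact this

/-- The evaluation map into the double character module is a pure monomorphism. -/
lemma evalCharacterHom_isPureMono : IsPureMono (evalCharacterHom R M) := by
  refine ⟨evalCharacterHom_injective M, ?_⟩
  intro Q _ _
  -- the comparison map `ξ : Q ⊗ M⁺⁺ → (Q ⊗ M)⁺⁺`
  let ξ : Q ⊗[R] CharacterModule (CharacterModule M) →+
      CharacterModule (CharacterModule (Q ⊗[R] M)) :=
    TensorProduct.liftAddHom
      (AddMonoidHom.mk' (fun q ↦ AddMonoidHom.mk' (fun ψ ↦ AddMonoidHom.mk'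
          (fun φ : CharacterModule (Q ⊗[R] M) ↦
            ψ (φ.comp (TensorProduct.mk R Q M q).toAddMonoidHom))
          (fun φ₁ φ₂ ↦ map_add ψ (φ₁.comp (TensorProduct.mk R Q M q).toAddMonoidHom)
            (φ₂.comp (TensorProduct.mk R Q M q).toAddMonoidHom)))
        (fun ψ₁ ψ₂ ↦ by ext φ; rfl))
        (fun q₁ q₂ ↦ by
          ext ψ φ
          show ψ (φ.comp (TensorProduct.mk R Q M (q₁ + q₂)).toAddMonoidHom) = _
          have h : (φ.comp (TensorProduct.mk R Q M (q₁ + q₂)).toAddMonoidHom)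
              = φ.comp (TensorProduct.mk R Q M q₁).toAddMonoidHom
                + φ.comp (TensorProduct.mk R Q M q₂).toAddMonoidHom := by
            ext m'
            show φ ((q₁ + q₂) ⊗ₜ[R] m') = φ (q₁ ⊗ₜ[R] m') + φ (q₂ ⊗ₜ[R] m')
            rw [TensorProduct.add_tmul, map_add]
          rw [h]
          exact map_add ψ (φ.comp (TensorProduct.mk R Q M q₁).toAddMonoidHom)
            (φ.comp (TensorProduct.mk R Q M q₂).toAddMonoidHom)))
      (fun r q ψ ↦ by
        ext φ
        refine Eq.trans ?_ (CharacterModule.smul_apply ψ r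
          (φ.comp (TensorProduct.mk R Q M q).toAddMonoidHom)).symm
        refine congrArg ψ ?_
        refine DFunLike.ext _ _ fun m' ↦ ?_
        show φ ((r • q) ⊗ₜ[R] m') = φ (q ⊗ₜ[R] (r • m'))
        rw [TensorProduct.smul_tmul])
  have key : ∀ x : Q ⊗[R] M,
      ξ (LinearMap.lTensor Q (evalCharacterHom R M) x) = evalCharacterHom R (Q ⊗[R] M) x := by
    intro x
    induction x with
    | zero => rw [map_zero, map_zero, map_zero]
    | tmul q a =>
      rw [LinearMap.lTensor_tmul]
      refine DFunLike.ext _ _ fun φ ↦ ?_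
      rfl
    | add a b ha hb => rw [map_add, map_add, map_add, ha, hb]
  intro x y hxy
  have h1 : evalCharacterHom R (Q ⊗[R] M) x = evalCharacterHom R (Q ⊗[R] M) y := by
    rw [← key, ← key, hxy]
  exact evalCharacterHom_injective (Q ⊗[R] M) h1

/-- Character modules are pure injective. -/
lemma characterModule_isPureInjective : IsPureInjective R (CharacterModule M) := by
  intro A B _ _ _ _ f hf g
  have hinj : Function.Injective (LinearMap.rTensor M f) :=
    (LinearMap.lTensor_inj_iff_rTensor_inj (M := M) (f := f)).mp (hf.2 M)
  obtain ⟨hhat, hh⟩ := CharacterModule.dual_surjective_of_injective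
    (LinearMap.rTensor M f) hinj (CharacterModule.homEquiv g)
  refine ⟨CharacterModule.homEquiv.symm hhat, ?_⟩
  have h2 : (CharacterModule.homEquiv.symm (CharacterModule.dual
      (LinearMap.rTensor M f) hhat) : A →ₗ[R] CharacterModule M) = g := by
    rw [hh, LinearEquiv.symm_apply_apply]
  refine LinearMap.ext fun a ↦ ?_
  rw [← h2]
  refine DFunLike.ext _ _ fun m' ↦ ?_
  show (CharacterModule.homEquiv.symm hhat) (f a) m'
    = (CharacterModule.homEquiv.symm (CharacterModule.dual (LinearMap.rTensor M f) hhat)) a m'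
  show hhat (f a ⊗ₜ[R] m') = (CharacterModule.dual (LinearMap.rTensor M f) hhat) (a ⊗ₜ[R] m')
  show hhat (f a ⊗ₜ[R] m') = hhat (LinearMap.rTensor M f (a ⊗ₜ[R] m'))
  rw [LinearMap.rTensor_tmul]
end Eval

section Quot
variable {R : Type u} [CommRing R]

/-- The cokernel of a pure monomorphism into a flat module is flat. -/
lemma flat_quotient_of_isPureMono {A B : Type u} [AddCommGroup A] [AddCommGroup B]
    [Module R A] [Module R B] (l : A →ₗ[R] B) (hpure : IsPureMono l)
    (hB : Module.Flat R B) :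
    Module.Flat R (B ⧸ LinearMap.range l) := by
  rw [Module.Flat.iff_rTensor_injective']
  intro I
  rw [injective_iff_map_eq_zero]
  intro x hx
  set p := (LinearMap.range l).mkQ with hp
  have hsurj_p : Function.Surjective p := Submodule.mkQ_surjective _
  have hexact : Function.Exact l p := LinearMap.exact_map_mkQ_range l
  obtain ⟨y, hy⟩ := LinearMap.lTensor_surjective (↥I) hsurj_p x
  set ι := I.subtype with hι
  have h0 : LinearMap.lTensor R p (LinearMap.rTensor B ι y) = 0 := by
    rw [← LinearMap.comp_apply, LinearMap.lTensor_comp_rTensor,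
      ← LinearMap.rTensor_comp_lTensor, LinearMap.comp_apply, hy]
    exact hx
  have hexact2 := lTensor_exact R hexact hsurj_p
  obtain ⟨a', ha'⟩ := (hexact2 _).mp h0
  have h1 : LinearMap.lTensor (R ⧸ I) l (LinearMap.rTensor A I.mkQ a') = 0 := by
    rw [← LinearMap.comp_apply, LinearMap.lTensor_comp_rTensor,
      ← LinearMap.rTensor_comp_lTensor, LinearMap.comp_apply, ha',
      ← LinearMap.rTensor_comp_apply]
    have hcomp : I.mkQ ∘ₗ ι = 0 := by
      refine LinearMap.ext fun v ↦ ?_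
      simpa [hι] using (Submodule.Quotient.mk_eq_zero I).mpr v.2
    rw [hcomp]
    simp
  have h2 : LinearMap.rTensor A I.mkQ a' = 0 :=
    (injective_iff_map_eq_zero _).mp (hpure.2 (R ⧸ I)) _ h1
  have hexact3 := rTensor_exact A (LinearMap.exact_subtype_mkQ I)
    (Submodule.mkQ_surjective I)
  obtain ⟨w, hw⟩ := (hexact3 a').mp h2
  have hinj : Function.Injective (LinearMap.rTensor B ι) :=
    Module.Flat.rTensor_preserves_injective_linearMap (M := B) ι (Submodule.injective_subtype I)
  have h3 : LinearMap.rTensor B ι (LinearMap.lTensor (↥I) l w) = LinearMap.rTensor B ι y := by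
    rw [← LinearMap.comp_apply, LinearMap.rTensor_comp_lTensor,
      ← LinearMap.lTensor_comp_rTensor, LinearMap.comp_apply, hw, ha']
  have h4 : LinearMap.lTensor (↥I) l w = y := hinj h3
  rw [← hy, ← h4, ← LinearMap.lTensor_comp_apply]
  have hpl : p ∘ₗ l = 0 :=
    LinearMap.ext fun a ↦ (Submodule.Quotient.mk_eq_zero _).mpr ⟨a, rfl⟩
  rw [hpl]
  simp
end Quot

/-- The sequence (3.1) in the proof of Proposition 3.7: over a commutative noetherian ring,
for a flat module `F`, the double character module `F⁺⁺` is flat and pure injective, the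
evaluation map `λ_F : F → F⁺⁺` is a pure monomorphism, and the quotient `F⁺⁺/λ_F(F)` is flat. -/
theorem flat_purely_embeds_in_pureInjective_flat_with_flat_quotient
    (R : Type u) [CommRing R] [IsNoetherianRing R]
    (F : Type u) [AddCommGroup F] [Module R F] (hF : Module.Flat R F) :
    Module.Flat R (CharacterModule (CharacterModule F)) ∧
    IsPureInjective R (CharacterModule (CharacterModule F)) ∧
    IsPureMono (evalCharacterHom R F) ∧
    Module.Flat R
      (CharacterModule (CharacterModule F) ⧸ LinearMap.range (evalCharacterHom R F)) := by
  have hbaer : Module.Baer R (CharacterModule F) := Module.Flat.iff_characterModule_baer.mp hF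
  have hflat : Module.Flat R (CharacterModule (CharacterModule F)) :=
    flat_characterModule_of_baer (CharacterModule F) hbaer
  have hpure : IsPureMono (evalCharacterHom R F) := evalCharacterHom_isPureMono F
  exact ⟨hflat, characterModule_isPureInjective (CharacterModule F), hpure,
    flat_quotient_of_isPureMono (evalCharacterHom R F) hpure hflat⟩
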